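/- Let c and p be natural numbers and let G be a finite connected simple graph with cutwidth at most c and diameter at most p. Then |V(G)| ≤ (2p+1)^c. -/

import Mathlib

open SimpleGraph

/-- `G` has cutwidth at most `c`: there is an enumeration of the vertices such that every
prefix of the enumeration is crossed by at most `c` edges. -/
def CutwidthLE {V : Type*} [Fintype V] (G : SimpleGraph V) (c : ℕ) : Prop :=
  ∃ e : V ≃ Fin (Fintype.card V),
    ∀ i : ℕ, i + 1 < Fintype.card V →
      {p : V × V | G.Adj p.1 p.2 ∧ (e p.1 : ℕ) ≤ i ∧ i < (e p.2 : ℕ)}.ncard ≤ c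

namespace Stmt8Aux

set_option linter.unusedSectionVars false

variable {V : Type*} [Fintype V] {G : SimpleGraph V}

/-- ordered pairs crossing cut `i` -/
def crossSet (G : SimpleGraph V) (pos : V → ℕ) (i : ℕ) : Set (V × V) :=
  {q | G.Adj q.1 q.2 ∧ pos q.1 ≤ i ∧ i < pos q.2}

/-- ordered pairs crossing every cut of the segment `[α, β]` -/
def spanSet (G : SimpleGraph V) (pos : V → ℕ) (α β : ℕ) : Set (V × V) :=
  {q | G.Adj q.1 q.2 ∧ pos q.1 ≤ α ∧ β < pos q.2}

lemma spanSet_subset_crossSet (pos : V → ℕ) {α β i : ℕ} (h1 : α ≤ i) (h2 : i ≤ β) :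
    spanSet G pos α β ⊆ crossSet G pos i := by
  rintro ⟨a, b⟩ ⟨hadj, ha, hb⟩
  exact ⟨hadj, le_trans ha h1, lt_of_le_of_lt h2 hb⟩

/-- a walk straddling cut `i` contains a dart crossing it -/
lemma cross_walk (pos : V → ℕ) {u v : V} (w : G.Walk u v) (i : ℕ)
    (h : (pos u ≤ i ∧ i < pos v) ∨ (pos v ≤ i ∧ i < pos u)) :
    ∃ d ∈ w.darts, (pos d.toProd.1 ≤ i ∧ i < pos d.toProd.2) ∨
      (pos d.toProd.2 ≤ i ∧ i < pos d.toProd.1) := by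
  induction w with
  | nil => exfalso; rcases h with ⟨h1, h2⟩ | ⟨h1, h2⟩ <;> omega
  | @cons a b v' hab rest ih =>
    rcases h with ⟨h1, h2⟩ | ⟨h1, h2⟩
    · by_cases hc : i < pos b
      · exact ⟨⟨(a, b), hab⟩, by simp [Walk.darts_cons], Or.inl ⟨h1, hc⟩⟩
      · obtain ⟨d, hd, hcr⟩ := ih (Or.inl ⟨le_of_not_gt hc, h2⟩)
        exact ⟨d, by simp [Walk.darts_cons, hd], hcr⟩
    · by_cases hc : pos b ≤ i
      · exact ⟨⟨(a, b), hab⟩, by simp [Walk.darts_cons], Or.inr ⟨hc, h2⟩⟩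
      · obtain ⟨d, hd, hcr⟩ := ih (Or.inr ⟨h1, lt_of_not_ge hc⟩)
        exact ⟨d, by simp [Walk.darts_cons, hd], hcr⟩

/-- From any walk to `u`, extract a suffix (after the last spanning edge) that is
spanning-free, starting either at the same start or at an endpoint of a spanning edge. -/
lemma exists_spfree (pos : V → ℕ) (α β : ℕ) {z u : V} (w : G.Walk z u) :
    ∃ (z' : V) (w' : G.Walk z' u), w'.length ≤ w.length ∧
      (∀ d ∈ w'.darts, ¬(pos d.toProd.1 ≤ α ∧ β < pos d.toProd.2) ∧
        ¬(pos d.toProd.2 ≤ α ∧ β < pos d.toProd.1)) ∧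
      (z' = z ∨ ∃ a b : V, G.Adj a b ∧ pos a ≤ α ∧ β < pos b ∧ (z' = a ∨ z' = b)) := by
  induction w with
  | nil => exact ⟨_, Walk.nil, le_rfl, by simp [Walk.darts_nil], Or.inl rfl⟩
  | @cons a b v' hab rest ih =>
    obtain ⟨z', w', hl, hf, hz⟩ := ih
    rcases hz with rfl | hout
    · by_cases hsp : (pos a ≤ α ∧ β < pos z') ∨ (pos z' ≤ α ∧ β < pos a)
      · refine ⟨z', w', ?_, hf, ?_⟩
        · simp only [Walk.length_cons]; omega
        · rcases hsp with h1 | h1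
          · exact Or.inr ⟨a, z', hab, h1.1, h1.2, Or.inr rfl⟩
          · exact Or.inr ⟨z', a, hab.symm, h1.1, h1.2, Or.inl rfl⟩
      · refine ⟨a, Walk.cons hab w', ?_, ?_, Or.inl rfl⟩
        · simp only [Walk.length_cons]; omega
        · intro d hd
          rw [Walk.darts_cons, List.mem_cons] at hd
          rcases hd with rfl | hd'
          · exact ⟨fun hx => hsp (Or.inl hx), fun hx => hsp (Or.inr hx)⟩
          · exact hf d hd'
    · refine ⟨z', w', ?_, hf, Or.inr hout⟩
      simp only [Walk.length_cons]; omega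

lemma length_filter_lt {γ : Type*} (P : γ → Bool) :
    ∀ (L : List γ) (q : γ), q ∈ L → P q = false → (L.filter P).length < L.length := by
  intro L
  induction L with
  | nil => intro q hq _; simp at hq
  | cons a t ih =>
    intro q hq hPq
    rcases List.mem_cons.mp hq with rfl | hq'
    · have h1 : (t.filter P).length ≤ t.length := List.length_filter_le _ _
      simp [List.filter_cons, hPq]; omega
    · have h2 := ih q hq' hPq
      rw [List.filter_cons]; split <;> simp only [List.length_cons] <;> omega

/-- the oriented edge list of a walk -/
def oriented (pos : V → ℕ) {u v : V} (w : G.Walk u v) : List (V × V) :=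
  w.darts.map (fun d => if pos d.toProd.1 ≤ pos d.toProd.2 then d.toProd else d.toProd.swap)

lemma oriented_length (pos : V → ℕ) {u v : V} (w : G.Walk u v) :
    (oriented pos w).length = w.length := by
  simp [oriented, Walk.length_darts]

lemma oriented_prop (pos : V → ℕ) {u v : V} (w : G.Walk u v) (α β : ℕ)
    (hf : ∀ d ∈ w.darts, ¬(pos d.toProd.1 ≤ α ∧ β < pos d.toProd.2) ∧
      ¬(pos d.toProd.2 ≤ α ∧ β < pos d.toProd.1)) :
    ∀ q ∈ oriented pos w, G.Adj q.1 q.2 ∧ ¬(pos q.1 ≤ α ∧ β < pos q.2) := by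
  intro q hq
  obtain ⟨d, hd, hdq⟩ := List.mem_map.mp hq
  by_cases hcmp : pos d.toProd.1 ≤ pos d.toProd.2
  · rw [if_pos hcmp] at hdq; subst hdq
    exact ⟨d.adj, (hf d hd).1⟩
  · rw [if_neg hcmp] at hdq; subst hdq
    exact ⟨d.adj.symm, (hf d hd).2⟩

lemma oriented_cover (pos : V → ℕ) {u v : V} (w : G.Walk u v) (i : ℕ)
    (h : (pos u ≤ i ∧ i < pos v) ∨ (pos v ≤ i ∧ i < pos u)) :
    ∃ q ∈ oriented pos w, pos q.1 ≤ i ∧ i < pos q.2 := by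
  obtain ⟨d, hd, hcr⟩ := cross_walk pos w i h
  rcases hcr with ⟨h1, h2⟩ | ⟨h1, h2⟩
  · exact ⟨d.toProd, List.mem_map.mpr ⟨d, hd, if_pos (by omega)⟩, h1, h2⟩
  · exact ⟨d.toProd.swap, List.mem_map.mpr ⟨d, hd, if_neg (by omega)⟩, h1, h2⟩


set_option maxHeartbeats 1000000 in
lemma main (pos : V → ℕ) (vtx : ℕ → V) (n c p : ℕ) (hp : 1 ≤ p)
    (hinj : Function.Injective pos)
    (hvtx : ∀ t, t < n → pos (vtx t) = t)
    (hconn : G.Connected)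
    (hdiam : ∀ u v : V, G.dist u v ≤ p)
    (hcw : ∀ i, i + 1 < n → (crossSet G pos i).ncard ≤ c) :
    ∀ m α β, β + 1 < n → c ≤ m + (spanSet G pos α β).ncard →
      β + 1 - α ≤ (2 * p + 1) ^ m ∧
        ((spanSet G pos α β).ncard = 0 → β + 1 - α ≤ p * (2 * p + 1) ^ (m - 1)) := by
  classical
  intro m
  induction m with
  | zero =>
    intro α β hβ hs
    have key : β ≤ α := by
      by_contra hab
      push_neg at hab  -- α < β
      have hseteq : ∀ i, α ≤ i → i ≤ β → crossSet G pos i = spanSet G pos α β := by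
        intro i h1 h2
        refine (Set.eq_of_subset_of_ncard_le (spanSet_subset_crossSet pos h1 h2) ?_
          (Set.toFinite _)).symm
        have := hcw i (by omega)
        omega
      have hα1 : α + 1 < n := by omega
      set v := vtx (α + 1) with hv
      have hposv : pos v = α + 1 := hvtx _ hα1
      have hvα : vtx α ≠ v := by
        intro hEq
        have h0 := hvtx α (by omega)
        rw [hEq, hposv] at h0; omega
      obtain ⟨wk⟩ := hconn.preconnected v (vtx α)
      have hnb : ∃ z, G.Adj v z := by
        have haux : ∀ (u' : V) (wk : G.Walk v u'), u' ≠ v → ∃ z, G.Adj v z := by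
          intro u' wk
          cases wk with
          | nil => intro h; exact absurd rfl h
          | cons h _ => intro _; exact ⟨_, h⟩
        exact haux _ wk hvα
      obtain ⟨z, hadj⟩ := hnb
      have hzv : pos z ≠ α + 1 := by
        intro hEq
        exact G.ne_of_adj hadj (hinj (by rw [hposv, hEq])).symm
      rcases lt_or_gt_of_ne hzv with hlt | hgt
      · -- (z, v) crosses cut α
        have hmem : (z, v) ∈ crossSet G pos α :=
          ⟨hadj.symm, show pos z ≤ α by omega, show α < pos v by omega⟩
        rw [hseteq α le_rfl (by omega)] at hmem
        have hcon : β < pos v := hmem.2.2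
        omega
      · -- (v, z) crosses cut α+1
        have hmem : (v, z) ∈ crossSet G pos (α + 1) :=
          ⟨hadj, show pos v ≤ α + 1 by omega, show α + 1 < pos z by omega⟩
        rw [hseteq (α + 1) (by omega) (by omega)] at hmem
        have hcon : pos v ≤ α := hmem.2.1
        omega
    constructor
    · have : (2 * p + 1) ^ 0 = 1 := pow_zero _
      omega
    · intro _
      have h1 : p * (2 * p + 1) ^ (0 - 1) = p := by norm_num
      omega
  | succ m' ih =>
    intro α β hβ hs
    by_cases hord : β < α
    · constructor
      · have : β + 1 - α = 0 := by omega
        rw [this]; exact Nat.zero_le _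
      · intro _
        have : β + 1 - α = 0 := by omega
        rw [this]; exact Nat.zero_le _
    push_neg at hord  -- α ≤ β
    set X : ℕ := (2 * p + 1) ^ m' with hX
    have hX1 : 1 ≤ X := Nat.one_le_pow _ _ (by omega)
    -- the cover claim
    have cover : ∀ k (L : List (V × V)), L.length ≤ k → ∀ α' β', α ≤ α' → β' ≤ β →
        (∀ q ∈ L, G.Adj q.1 q.2 ∧ ¬(pos q.1 ≤ α ∧ β < pos q.2)) →
        (∀ i, α' ≤ i → i ≤ β' → ∃ q ∈ L, pos q.1 ≤ i ∧ i < pos q.2) →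
        β' + 1 - α' ≤ k * X := by
      intro k
      induction k with
      | zero =>
        intro L hL α' β' _ _ _ hcov
        by_cases h : α' ≤ β'
        · obtain ⟨q, hq, _⟩ := hcov α' le_rfl h
          have hLnil : L = [] := List.length_eq_zero_iff.mp (by omega)
          rw [hLnil] at hq
          simp at hq
        · have : β' + 1 - α' = 0 := by omega
          rw [this]; exact Nat.zero_le _
      | succ k ihk =>
        intro L hL α' β' hαα' hβ'β hprop hcov
        by_cases h : α' ≤ β'
        swap
        · have : β' + 1 - α' = 0 := by omega
          rw [this]; exact Nat.zero_le _
        obtain ⟨q, hqL, hq1, hq2⟩ := hcov α' le_rfl h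
        have hαb : α' < pos q.2 := hq2
        have hreg : min β' (pos q.2 - 1) + 1 < n := by omega
        have hspan_sub : spanSet G pos α β ⊆ spanSet G pos α' (min β' (pos q.2 - 1)) := by
          rintro ⟨x, y⟩ ⟨hadj, hx, hy⟩
          have hy' : β < pos y := hy
          exact ⟨hadj, le_trans hx hαα', show min β' (pos q.2 - 1) < pos y by omega⟩
        have hq_mem : q ∈ spanSet G pos α' (min β' (pos q.2 - 1)) :=
          ⟨(hprop q hqL).1, hq1, by omega⟩
        have hq_not : q ∉ spanSet G pos α β := fun hmem => (hprop q hqL).2 ⟨hmem.2.1, hmem.2.2⟩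
        have hcard : (spanSet G pos α β).ncard + 1 ≤
            (spanSet G pos α' (min β' (pos q.2 - 1))).ncard := by
          have h1 := Set.ncard_insert_of_notMem hq_not (Set.toFinite _)
          have h2 := Set.ncard_le_ncard (Set.insert_subset hq_mem hspan_sub) (Set.toFinite _)
          omega
        have hregbound := (ih α' (min β' (pos q.2 - 1)) hreg (by omega)).1
        by_cases hb : β' < pos q.2
        · have hmin : min β' (pos q.2 - 1) = β' := by omega
          rw [hmin] at hregbound
          calc β' + 1 - α' ≤ X := hregbound
            _ ≤ (k + 1) * X := Nat.le_mul_of_pos_left _ (by omega)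
        · push_neg at hb  -- pos q.2 ≤ β'
          have hmin : min β' (pos q.2 - 1) = pos q.2 - 1 := by omega
          rw [hmin] at hregbound
          have hL'len : (L.filter (fun q' => decide (pos q.2 < pos q'.2))).length ≤ k := by
            have h5 := length_filter_lt (fun q' => decide (pos q.2 < pos q'.2)) L q hqL
              (by simp)
            omega
          have hrest := ihk (L.filter (fun q' => decide (pos q.2 < pos q'.2))) hL'len
            (pos q.2) β' (by omega) hβ'β
            (fun q' hq' => hprop q' (List.mem_of_mem_filter hq'))
            (by
              intro i hi1 hi2
              obtain ⟨q'', hq'', hc1, hc2⟩ := hcov i (by omega) hi2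
              refine ⟨q'', List.mem_filter.mpr ⟨hq'', by simp; omega⟩, hc1, hc2⟩)
          have hsum : β' + 1 - α' ≤ (pos q.2 - 1 + 1 - α') + (β' + 1 - pos q.2) := by omega
          calc β' + 1 - α' ≤ (pos q.2 - 1 + 1 - α') + (β' + 1 - pos q.2) := hsum
            _ ≤ X + k * X := Nat.add_le_add hregbound hrest
            _ = (k + 1) * X := by ring
    -- walks from vtx α, spanning-free suffixes
    have hαn : α < n := by omega
    have dichot : ∀ t, α ≤ t → t ≤ β + 1 →
        (∃ (z' : V) (w' : G.Walk z' (vtx t)), w'.length ≤ p ∧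
          (∀ d ∈ w'.darts, ¬(pos d.toProd.1 ≤ α ∧ β < pos d.toProd.2) ∧
            ¬(pos d.toProd.2 ≤ α ∧ β < pos d.toProd.1)) ∧ pos z' ≤ α) ∨
        ((spanSet G pos α β).Nonempty ∧
          ∃ (z' : V) (w' : G.Walk z' (vtx t)), w'.length ≤ p ∧
          (∀ d ∈ w'.darts, ¬(pos d.toProd.1 ≤ α ∧ β < pos d.toProd.2) ∧
            ¬(pos d.toProd.2 ≤ α ∧ β < pos d.toProd.1)) ∧ β + 1 ≤ pos z') := by
      intro t h1 h2
      obtain ⟨w0, hw0⟩ := hconn.exists_walk_length_eq_dist (vtx α) (vtx t)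
      have hlen : w0.length ≤ p := by rw [hw0]; exact hdiam _ _
      obtain ⟨z', w', hl, hf, hz⟩ := exists_spfree pos α β w0
      rcases hz with rfl | ⟨a, b2, hadj, ha, hb2, hz⟩
      · left
        exact ⟨_, w', le_trans hl hlen, hf, (hvtx α hαn).le⟩
      · have hspn : ((a, b2) : V × V) ∈ spanSet G pos α β := ⟨hadj, ha, hb2⟩
        rcases hz with rfl | rfl
        · left; exact ⟨z', w', le_trans hl hlen, hf, ha⟩
        · right; exact ⟨⟨_, hspn⟩, z', w', le_trans hl hlen, hf, hb2⟩
    -- the set of left-reachable positions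
    set SS : Set ℕ := {t | α ≤ t ∧ t ≤ β + 1 ∧ ∃ (z' : V) (w' : G.Walk z' (vtx t)),
      w'.length ≤ p ∧ (∀ d ∈ w'.darts, ¬(pos d.toProd.1 ≤ α ∧ β < pos d.toProd.2) ∧
        ¬(pos d.toProd.2 ≤ α ∧ β < pos d.toProd.1)) ∧ pos z' ≤ α} with hSS
    have hSne : α ∈ SS := by
      refine ⟨le_rfl, by omega, vtx α, Walk.nil, by simp, by simp [Walk.darts_nil], (hvtx α hαn).le⟩
    have hbdd : BddAbove SS := ⟨β + 1, fun t ht => ht.2.1⟩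
    set t0 : ℕ := sSup SS with ht0
    have htS : t0 ∈ SS := Nat.sSup_mem ⟨α, hSne⟩ hbdd
    obtain ⟨htα, htβ, zL, wL, hwLlen, hwLf, hzL⟩ := htS
    -- bound on the left part [α, t0-1]
    have hboundL : t0 - α ≤ p * X := by
      by_cases htt : t0 = α
      · rw [htt]; simp
      · have htα' : α < t0 := by omega
        have hc := cover p (oriented pos wL) (by rw [oriented_length]; exact hwLlen)
          α (t0 - 1) le_rfl (by omega)
          (oriented_prop pos wL α β hwLf)
          (by
            intro i hi1 hi2
            have hit : i < t0 := by omega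
            apply oriented_cover pos wL i
            left
            constructor
            · omega
            · rw [hvtx t0 (by omega)]; exact hit)
        omega
    constructor
    · -- main bound
      by_cases htop : t0 = β + 1
      · calc β + 1 - α = t0 - α := by omega
          _ ≤ p * X := hboundL
          _ ≤ (2 * p + 1) ^ (m' + 1) := by
            rw [pow_succ, ← hX]
            calc p * X ≤ X * (2 * p + 1) := by nlinarith
              _ = (2 * p + 1) ^ m' * (2 * p + 1) := by rw [hX]
      · have ht0β : t0 ≤ β := by omega
        -- right part via dichotomy at t0+1
        have hdt := dichot (t0 + 1) (by omega) (by omega)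
        rcases hdt with ⟨z', w', hwlen, hwf, hz'⟩ | ⟨_, z', w', hwlen, hwf, hz'⟩
        · exfalso
          have : t0 + 1 ∈ SS := ⟨by omega, by omega, z', w', hwlen, hwf, hz'⟩
          have := le_csSup hbdd this
          omega
        · have hboundR : β + 1 - (t0 + 1) ≤ p * X := by
            have hc := cover p (oriented pos w') (by rw [oriented_length]; exact hwlen)
              (t0 + 1) β (by omega) le_rfl
              (oriented_prop pos w' α β hwf)
              (by
                intro i hi1 hi2
                apply oriented_cover pos w' i
                right
                constructor
                · rw [hvtx (t0 + 1) (by omega)]; omega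
                · omega)
            omega
          calc β + 1 - α ≤ (t0 - α) + (β + 1 - (t0 + 1)) + 1 := by omega
            _ ≤ p * X + (p * X) + 1 :=
              Nat.add_le_add (Nat.add_le_add hboundL hboundR) (le_refl 1)
            _ ≤ (2 * p + 1) ^ (m' + 1) := by
              rw [pow_succ, ← hX]
              nlinarith
    · -- refined bound when there are no spanning edges
      intro hs0
      have hempty : spanSet G pos α β = ∅ :=
        (Set.ncard_eq_zero (Set.toFinite _)).mp hs0
      have htop : β + 1 ∈ SS := by
        rcases dichot (β + 1) (by omega) le_rfl with ⟨z', w', hwlen, hwf, hz'⟩ | ⟨⟨q, hq⟩, _⟩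
        · exact ⟨by omega, le_rfl, z', w', hwlen, hwf, hz'⟩
        · rw [hempty] at hq; simp at hq
      have ht0top : t0 = β + 1 := le_antisymm htβ (le_csSup hbdd htop)
      rw [Nat.add_sub_cancel, ← hX, ← ht0top]
      exact hboundL

end Stmt8Aux

theorem stmt8 {V : Type*} [Fintype V] (G : SimpleGraph V) (c p : ℕ)
    (hconn : G.Connected) (hcw : CutwidthLE G c)
    (hdiam : ∀ u v : V, G.dist u v ≤ p) :
    Fintype.card V ≤ (2 * p + 1) ^ c := by
  classical
  obtain ⟨e, hcw⟩ := hcw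
  by_cases hn2 : Fintype.card V < 2
  · have h1 : (1:ℕ) ≤ (2 * p + 1) ^ c := Nat.one_le_pow _ _ (by omega)
    omega
  push_neg at hn2
  have hn0 : 0 < Fintype.card V := by omega
  set pos : V → ℕ := fun v => (e v : ℕ) with hpos
  set vtx : ℕ → V := fun t => e.symm ⟨t % Fintype.card V, Nat.mod_lt _ hn0⟩ with hvtxdef
  have hinj : Function.Injective pos := by
    intro a b h
    exact e.injective (Fin.ext h)
  have hvtx : ∀ t, t < Fintype.card V → pos (vtx t) = t := by
    intro t ht
    simp [hpos, hvtxdef, Nat.mod_eq_of_lt ht]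
  have hcw' : ∀ i, i + 1 < Fintype.card V → (Stmt8Aux.crossSet G pos i).ncard ≤ c := by
    intro i hi
    have h := hcw i hi
    have heq : Stmt8Aux.crossSet G pos i =
        {q : V × V | G.Adj q.1 q.2 ∧ (e q.1 : ℕ) ≤ i ∧ i < (e q.2 : ℕ)} := by
      ext q
      simp [Stmt8Aux.crossSet, hpos]
    rw [heq]
    exact h
  have hnbr : ∀ (v u' : V), u' ≠ v → ∃ z, G.Adj v z := by
    intro v u' hne
    obtain ⟨wk⟩ := hconn.preconnected v u'
    cases wk with
    | nil => exact absurd rfl hne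
    | cons h _ => exact ⟨_, h⟩
  have hv01 : vtx 0 ≠ vtx 1 := by
    intro hEq
    have h0 := hvtx 0 (by omega)
    have h1 := hvtx 1 (by omega)
    rw [hEq, h1] at h0
    omega
  by_cases hc0 : c = 0
  · exfalso
    obtain ⟨z, hadj⟩ := hnbr (vtx 0) (vtx 1) (Ne.symm hv01)
    have hz0 : pos z ≠ 0 := by
      intro hEq
      have : z = vtx 0 := hinj (by rw [hEq, hvtx 0 (by omega)])
      exact G.ne_of_adj hadj this.symm
    have hmem : ((vtx 0, z) : V × V) ∈ Stmt8Aux.crossSet G pos 0 :=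
      ⟨hadj, show pos (vtx 0) ≤ 0 by rw [hvtx 0 (by omega)], show 0 < pos z by omega⟩
    have hposcard : 0 < (Stmt8Aux.crossSet G pos 0).ncard :=
      (Set.ncard_pos (Set.toFinite _)).mpr ⟨_, hmem⟩
    have := hcw' 0 (by omega)
    omega
  by_cases hp0 : p = 0
  · exfalso
    have hd := hdiam (vtx 0) (vtx 1)
    rw [hp0] at hd
    have : vtx 0 = vtx 1 := hconn.dist_eq_zero_iff.mp (by omega)
    exact hv01 this
  have hp : 1 ≤ p := by omega
  have hmain := Stmt8Aux.main pos vtx (Fintype.card V) c p hp hinj hvtx hconn hdiam hcw'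
  have hβtop : (Fintype.card V - 2) + 1 < Fintype.card V := by omega
  have hY1 : 1 ≤ (2 * p + 1) ^ (c - 1) := Nat.one_le_pow _ _ (by omega)
  have hXc : (2 * p + 1) ^ c = (2 * p + 1) ^ (c - 1) * (2 * p + 1) := by
    rw [← pow_succ]
    congr 1
    omega
  by_cases hs1 : 1 ≤ (Stmt8Aux.spanSet G pos 0 (Fintype.card V - 2)).ncard
  · have h := (hmain (c - 1) 0 (Fintype.card V - 2) hβtop (by omega)).1
    have h2 : Fintype.card V ≤ (2 * p + 1) ^ (c - 1) + 1 := by omega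
    rw [hXc]
    nlinarith
  · have hs0 : (Stmt8Aux.spanSet G pos 0 (Fintype.card V - 2)).ncard = 0 := by omega
    have h := (hmain c 0 (Fintype.card V - 2) hβtop (by omega)).2 hs0
    have h2 : Fintype.card V ≤ p * (2 * p + 1) ^ (c - 1) + 1 := by omega
    rw [hXc]
    nlinarith
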